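/- Let E be a Euclidean space of dimension n ≥ 3, m ≥ 1, and suppose W is a smooth function on S^{n-1} such that for every nonzero ξ ∈ E*, the function ⟨ξ, ∇W⟩ restricted to S^{n-2}_ξ is a sum of spherical harmonics of degree ≤ m-2 on S^{n-2}_ξ of the same parity as m. Extend W to E \ {0} as an (m-1)-homogeneous function. Then for every nonzero ξ, the function dW(ξ^♯) restricted to the hyperplane ker ξ is a homogeneous polynomial of degree m-2; in particular, for v ∈ ker ξ one has ⟨ξ, ∇W(v)⟩ = dW(ξ^♯)(v), where ∇ on the left is the spherical gradient extended by homogeneity. -/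

import Mathlib

open scoped RealInnerProductSpace

noncomputable section

abbrev E (n : ℕ) := EuclideanSpace ℝ (Fin n)

def evalP {n : ℕ} (P : MvPolynomial (Fin n) ℝ) (v : E n) : ℝ :=
  MvPolynomial.eval (fun i => v i) P

def sphereS (n : ℕ) : Set (E n) := Metric.sphere 0 1

def subSphere {n : ℕ} (w : E n) : Set (E n) :=
  Metric.sphere 0 1 ∩ {v : E n | ⟪w, v⟫ = 0}

/-- The `(m-1)`-homogeneous extension of a function on the sphere. -/
def homExt {n : ℕ} (m : ℕ) (W : E n → ℝ) (x : E n) : ℝ :=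
  ‖x‖ ^ (m - 1) * W (‖x‖⁻¹ • x)

lemma norm_hasFDerivAt {n : ℕ} {v : E n} (hv : v ≠ 0) :
    HasFDerivAt (fun x : E n => ‖x‖)
      ((1 / (2 * Real.sqrt (‖v‖ ^ 2))) • (2 • innerSL ℝ v)) v := by
  have h1 := ((hasStrictFDerivAt_norm_sq v).hasFDerivAt).sqrt
    (pow_ne_zero 2 (norm_ne_zero_iff.mpr hv))
  simpa only [Real.sqrt_sq (norm_nonneg _)] using h1

lemma key {n : ℕ} (m : ℕ) {W : E n → ℝ} (hW : ContDiff ℝ (⊤ : ℕ∞) W) {v w : E n}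
    (hv : v ≠ 0) (hvw : ⟪v, w⟫ = 0) :
    fderiv ℝ (homExt m W) v w = ‖v‖ ^ (m - 1) * ‖v‖⁻¹ * fderiv ℝ W (‖v‖⁻¹ • v) w := by
  have hc : ‖v‖ ≠ 0 := norm_ne_zero_iff.mpr hv
  set N : E n →L[ℝ] ℝ := (1 / (2 * Real.sqrt (‖v‖ ^ 2))) • (2 • innerSL ℝ v) with hN
  have hnorm : HasFDerivAt (fun x : E n => ‖x‖) N v := norm_hasFDerivAt hv
  have hNw : N w = 0 := by
    simp [hN, hvw, ContinuousLinearMap.smul_apply]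
  have hpow : HasFDerivAt (fun x : E n => ‖x‖ ^ (m - 1))
      (((↑(m - 1) : ℝ) * ‖v‖ ^ (m - 1 - 1)) • N) v :=
    (hasDerivAt_pow (m - 1) ‖v‖).comp_hasFDerivAt v hnorm
  have hinv : HasFDerivAt (fun x : E n => ‖x‖⁻¹) ((-(‖v‖ ^ 2)⁻¹) • N) v :=
    (hasDerivAt_inv hc).comp_hasFDerivAt v hnorm
  have hr : HasFDerivAt (fun x : E n => ‖x‖⁻¹ • x)
      (‖v‖⁻¹ • ContinuousLinearMap.id ℝ (E n) + ((-(‖v‖ ^ 2)⁻¹) • N).smulRight v) v :=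
    hinv.smul (hasFDerivAt_id v)
  have hWu : HasFDerivAt W (fderiv ℝ W (‖v‖⁻¹ • v)) (‖v‖⁻¹ • v) :=
    ((hW.differentiable (by simp)) (‖v‖⁻¹ • v)).hasFDerivAt
  have hcomp : HasFDerivAt (W ∘ fun x : E n => ‖x‖⁻¹ • x)
      ((fderiv ℝ W (‖v‖⁻¹ • v)).comp
        (‖v‖⁻¹ • ContinuousLinearMap.id ℝ (E n) + ((-(‖v‖ ^ 2)⁻¹) • N).smulRight v)) v :=
    HasFDerivAt.comp (f := fun x : E n => ‖x‖⁻¹ • x) (g := W) v hWu hr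
  have hmain : HasFDerivAt (fun y : E n => ‖y‖ ^ (m - 1) * (W ∘ fun x : E n => ‖x‖⁻¹ • x) y)
      ((‖v‖ ^ (m - 1)) • ((fderiv ℝ W (‖v‖⁻¹ • v)).comp
          (‖v‖⁻¹ • ContinuousLinearMap.id ℝ (E n) + ((-(‖v‖ ^ 2)⁻¹) • N).smulRight v)) +
        (W (‖v‖⁻¹ • v)) • (((↑(m - 1) : ℝ) * ‖v‖ ^ (m - 1 - 1)) • N)) v :=
    hpow.mul hcomp
  have heq : homExt m W = fun y : E n => ‖y‖ ^ (m - 1) * (W ∘ fun x : E n => ‖x‖⁻¹ • x) y := rfl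
  rw [heq, hmain.fderiv]
  simp only [ContinuousLinearMap.add_apply, ContinuousLinearMap.smul_apply,
    ContinuousLinearMap.comp_apply, ContinuousLinearMap.smulRight_apply,
    ContinuousLinearMap.id_apply, hNw, smul_eq_mul, mul_zero, zero_smul, add_zero,
    zero_mul, smul_zero]
  rw [map_smul, smul_eq_mul]
  ring

lemma eval_homog {n d : ℕ} {P : MvPolynomial (Fin n) ℝ} (hP : P.IsHomogeneous d)
    (c : ℝ) (x : Fin n → ℝ) :
    MvPolynomial.eval (fun i => c * x i) P = c ^ d * MvPolynomial.eval x P := by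
  rw [MvPolynomial.eval_eq, MvPolynomial.eval_eq, Finset.mul_sum]
  refine Finset.sum_congr rfl fun a ha => ?_
  have h := hP (MvPolynomial.mem_support_iff.mp ha)
  have hdeg : ∑ i ∈ a.support, a i = d := by
    rw [← h, show (Finsupp.weight 1 : (Fin n →₀ ℕ) →+ ℕ) = Finsupp.weight (fun _ => 1) from rfl,
      ← Finsupp.degree_eq_weight_one]
    rfl
  simp_rw [mul_pow]
  rw [Finset.prod_mul_distrib, Finset.prod_pow_eq_pow_sum, hdeg]
  ring

/-- Suppose `W` is smooth on `S^{n-1}` (n ≥ 3, m ≥ 1) and, for every nonzero covector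
(dual vector `w`), the function `⟨ξ, ∇W⟩` restricted to `S^{n-2}_ξ` is a sum of spherical
harmonics of degree `≤ m - 2` of the same parity as `m` (equivalently, the restriction of a
homogeneous polynomial of degree `m - 2`; for `m = 1` this means the function vanishes).
Extend `W` to `E \ {0}` as an `(m-1)`-homogeneous function.  Then for every nonzero `w`:
the directional derivative `dW(ξ^♯)` restricted to `ker ξ` is a homogeneous polynomial of
degree `m - 2`, and for `v ∈ S^{n-2}_ξ` one has `⟨ξ, ∇W(v)⟩ = dW(ξ^♯)(v)`, the left-hand
side being the pairing of `ξ` with the spherical gradient. -/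
theorem xray_stmt19 {n m : ℕ} (hn : 3 ≤ n) (hm : 1 ≤ m)
    (W : E n → ℝ) (hW : ContDiff ℝ (⊤ : ℕ∞) W)
    (hyp : ∀ w : E n, w ≠ 0 → ∃ P : MvPolynomial (Fin n) ℝ,
      (if 2 ≤ m then P.IsHomogeneous (m - 2) else P = 0) ∧
      ∀ v ∈ subSphere w, ⟪w, gradient W v⟫ = evalP P v) :
    ∀ w : E n, w ≠ 0 →
      (∃ Q : MvPolynomial (Fin n) ℝ,
        (if 2 ≤ m then Q.IsHomogeneous (m - 2) else Q = 0) ∧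
        ∀ v : E n, v ≠ 0 → ⟪w, v⟫ = 0 →
          fderiv ℝ (homExt m W) v w = evalP Q v) ∧
      (∀ v ∈ subSphere w, ⟪w, gradient W v⟫ = fderiv ℝ (homExt m W) v w) := by
  intro w hw
  obtain ⟨P, hPhom, hPval⟩ := hyp w hw
  have grad_eq : ∀ u : E n, fderiv ℝ W u w = ⟪w, gradient W u⟫ := by
    intro u
    have h := ((hW.differentiable (by simp)) u).hasGradientAt
    rw [hasGradientAt_iff_hasFDerivAt] at h
    rw [h.fderiv, InnerProductSpace.toDual_apply_apply, real_inner_comm]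
  have hkey : ∀ v : E n, v ≠ 0 → ⟪w, v⟫ = 0 →
      fderiv ℝ (homExt m W) v w
        = ‖v‖ ^ (m - 1) * ‖v‖⁻¹ * ⟪w, gradient W (‖v‖⁻¹ • v)⟫ := by
    intro v hv hvw
    rw [key m hW hv (by rw [real_inner_comm]; exact hvw), grad_eq]
  have hsub : ∀ v : E n, v ≠ 0 → ⟪w, v⟫ = 0 → (‖v‖⁻¹ • v) ∈ subSphere w := by
    intro v hv hvw
    refine ⟨?_, ?_⟩
    · rw [mem_sphere_zero_iff_norm, norm_smul]
      simp [inv_mul_cancel₀ (norm_ne_zero_iff.mpr hv)]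
    · show ⟪w, ‖v‖⁻¹ • v⟫ = 0
      rw [real_inner_smul_right, hvw, mul_zero]
  constructor
  · refine ⟨P, hPhom, ?_⟩
    intro v hv hvw
    have hc : ‖v‖ ≠ 0 := norm_ne_zero_iff.mpr hv
    rw [hkey v hv hvw, hPval _ (hsub v hv hvw)]
    by_cases h2 : 2 ≤ m
    · rw [if_pos h2] at hPhom
      have hvP : evalP P v = ‖v‖ ^ (m - 2) * evalP P (‖v‖⁻¹ • v) := by
        unfold evalP
        have harg : (fun i => (v : E n) i) = fun i => ‖v‖ * ((‖v‖⁻¹ • v : E n) i) := by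
          funext i
          simp only [PiLp.smul_apply, smul_eq_mul]
          field_simp
        rw [harg, eval_homog hPhom]
      rw [hvP]
      have hm1 : m - 1 = (m - 2) + 1 := by omega
      rw [hm1, pow_succ]
      field_simp
    · rw [if_neg h2] at hPhom
      simp [hPhom, evalP]
  · intro v hvmem
    obtain ⟨hv1, hv2⟩ := hvmem
    have hvs : ‖v‖ = 1 := by simpa using hv1
    have hv : v ≠ 0 := by
      intro h; rw [h] at hvs; simp at hvs
    rw [hkey v hv hv2, hvs]
    simp
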